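/- For every real η > 0, every integer k ≥ 1 and every real h, one has h · Σ_{i=1}^k [ (1/k) · Σ_{j=k+1}^∞ P_η(j) + Σ_{j=0}^{k−i} P_η(i+j)/(i+j) ] = h · (1 − (1 + η/3.5)^(−3.5)). In particular the left-hand side does not depend on k. -/

import Mathlib

open Real Filter

noncomputable def bcoef (a : ℝ) (j : ℕ) : ℝ :=
  Real.Gamma ((j : ℝ) + a) / (Real.Gamma a * (Nat.factorial j : ℝ))

lemma bcoef_pos {a : ℝ} (ha : 0 < a) (j : ℕ) : 0 < bcoef a j := by
  apply div_pos
  · exact Real.Gamma_pos_of_pos (by positivity)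
  · exact mul_pos (Real.Gamma_pos_of_pos ha) (by positivity)

lemma bcoef_zero (a : ℝ) (ha : 0 < a) : bcoef a 0 = 1 := by
  have := (Real.Gamma_pos_of_pos ha).ne'
  simp [bcoef, this]

lemma bcoef_succ {a : ℝ} (ha : 0 < a) (j : ℕ) :
    bcoef a (j + 1) = bcoef a j * (((j : ℝ) + a) / ((j : ℝ) + 1)) := by
  have hne : ((j : ℝ) + a) ≠ 0 := by positivity
  have hG : Real.Gamma (((j : ℕ) + 1 : ℕ) + a) = ((j : ℝ) + a) * Real.Gamma ((j : ℝ) + a) := by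
    push_cast
    rw [show (j : ℝ) + 1 + a = ((j : ℝ) + a) + 1 by ring, Real.Gamma_add_one hne]
  have hGa : Real.Gamma a ≠ 0 := (Real.Gamma_pos_of_pos ha).ne'
  have hf : (Nat.factorial (j+1) : ℝ) = ((j : ℝ) + 1) * (Nat.factorial j : ℝ) := by
    rw [Nat.factorial_succ]; push_cast; ring
  rw [bcoef, bcoef, hG, hf]
  have h1 : ((j:ℝ)+1) ≠ 0 := by positivity
  have h2 : (Nat.factorial j : ℝ) ≠ 0 := by positivity
  field_simp

lemma tendsto_ratio (c : ℝ) : Tendsto (fun n : ℕ => ((n : ℝ) + c) / ((n : ℝ) + 1)) atTop (nhds 1) := by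
  have h0 : Tendsto (fun n : ℕ => (c - 1) / ((n : ℝ) + 1)) atTop (nhds 0) := by
    apply Tendsto.div_atTop tendsto_const_nhds
    exact tendsto_atTop_add_const_right _ 1 tendsto_natCast_atTop_atTop
  have := (tendsto_const_nhds : Tendsto (fun _ : ℕ => (1:ℝ)) atTop (nhds 1)).add h0
  rw [add_zero] at this
  apply this.congr'
  filter_upwards [eventually_atTop.2 ⟨0, fun n _ => trivial⟩] with n _
  have : ((n : ℝ) + 1) ≠ 0 := by positivity
  field_simp
  ring

lemma summable_master {a r : ℝ} (ha : 0 < a) (hr0 : 0 < r) (hr1 : r < 1) :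
    Summable (fun n : ℕ => bcoef a n * ((n : ℝ) + 1) * r ^ n) := by
  apply summable_of_ratio_test_tendsto_lt_one hr1
  · filter_upwards [eventually_atTop.2 ⟨0, fun n _ => trivial⟩] with n _
    have := bcoef_pos ha n
    positivity
  · have hev : (fun n : ℕ => ‖bcoef a (n+1) * (((n+1 : ℕ) : ℝ) + 1) * r ^ (n+1)‖ /
        ‖bcoef a n * ((n : ℝ) + 1) * r ^ n‖)
        = fun n : ℕ => r * (((n : ℝ) + a) / ((n : ℝ) + 1)) * (((n : ℝ) + 2) / ((n : ℝ) + 1)) := by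
      funext n
      have hb := bcoef_pos ha n
      have hb' := bcoef_pos ha (n+1)
      have h1 : (0:ℝ) < (n : ℝ) + 1 := by positivity
      have h2 : (0:ℝ) < (n : ℝ) + 2 := by positivity
      have hrp : (0:ℝ) < r ^ n := by positivity
      rw [Real.norm_eq_abs, Real.norm_eq_abs, abs_of_pos (by positivity), abs_of_pos (by positivity)]
      rw [bcoef_succ ha n]
      push_cast
      field_simp
      ring
    rw [hev]
    have h1 := tendsto_ratio a
    have h2 := tendsto_ratio 2
    have := ((tendsto_const_nhds : Tendsto (fun _ : ℕ => r) atTop (nhds r)).mul h1).mul h2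
    simpa using this

lemma binom_hasSum {a : ℝ} (ha : 0 < a) {x : ℝ} (hx0 : 0 ≤ x) (hx1 : x < 1) :
    HasSum (fun j : ℕ => bcoef a j * x ^ j) ((1 - x) ^ (-a)) := by
  set r : ℝ := (1 + x) / 2 with hr_def
  have hr0 : 0 < r := by rw [hr_def]; linarith
  have hxr : x < r := by rw [hr_def]; linarith
  have hr1 : r < 1 := by rw [hr_def]; linarith
  set g : ℕ → ℝ → ℝ := fun n y => bcoef a n * y ^ n with hg_def
  set g' : ℕ → ℝ → ℝ := fun n y => bcoef a n * ((n : ℝ) * y ^ (n - 1)) with hg'_def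
  set u : ℕ → ℝ := fun n => bcoef a n * ((n : ℝ) + 1) * r ^ n / r with hu_def
  have hu : Summable u := (summable_master ha hr0 hr1).div_const r
  have hgderiv : ∀ (n : ℕ) (y : ℝ), HasDerivAt (g n) (g' n y) y := fun n y =>
    (hasDerivAt_pow n y).const_mul (bcoef a n)
  have hg'bound : ∀ (n : ℕ) (y : ℝ), y ∈ Metric.ball (0 : ℝ) r → ‖g' n y‖ ≤ u n := by
    intro n y hy
    rw [mem_ball_zero_iff, Real.norm_eq_abs] at hy
    have hb := bcoef_pos ha n
    match n with
    | 0 =>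
      simp only [hg'_def, hu_def, Nat.cast_zero, zero_mul, mul_zero, norm_zero]
      positivity
    | (m + 1) =>
      have h1 : ‖g' (m+1) y‖ = bcoef a (m+1) * (((m : ℝ) + 1) * |y| ^ m) := by
        simp only [hg'_def]
        rw [Real.norm_eq_abs, abs_mul, abs_mul, abs_pow,
          abs_of_pos (bcoef_pos ha (m+1)),
          abs_of_pos (show (0:ℝ) < ((m+1:ℕ):ℝ) by positivity)]
        push_cast
        ring
      have h2 : u (m+1) = bcoef a (m+1) * (((m : ℝ) + 2) * r ^ m) := by
        simp only [hu_def]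
        rw [pow_succ]
        push_cast
        field_simp
        ring
      rw [h1, h2]
      have hyr : |y| ^ m ≤ r ^ m := pow_le_pow_left₀ (abs_nonneg y) hy.le m
      have : ((m : ℝ) + 1) * |y| ^ m ≤ ((m : ℝ) + 2) * r ^ m := by
        have h3 : ((m : ℝ) + 1) * |y| ^ m ≤ ((m : ℝ) + 1) * r ^ m :=
          mul_le_mul_of_nonneg_left hyr (by positivity)
        have h4 : ((m : ℝ) + 1) * r ^ m ≤ ((m : ℝ) + 2) * r ^ m := by
          apply mul_le_mul_of_nonneg_right (by linarith) (by positivity)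
        linarith
      exact mul_le_mul_of_nonneg_left this hb.le
  have hg0 : Summable (fun n => g n 0) := by
    apply summable_of_ne_finset_zero (s := {0})
    intro n hn
    simp only [Finset.mem_singleton] at hn
    simp [hg_def, zero_pow hn]
  have hball : ∀ y : ℝ, y ∈ Metric.ball (0:ℝ) r → True := fun _ _ => trivial
  have h0mem : (0:ℝ) ∈ Metric.ball (0:ℝ) r := by simpa using hr0
  -- summability of g and g' at points of the ball
  have Sd : ∀ y : ℝ, y ∈ Metric.ball (0:ℝ) r → Summable (fun n => g' n y) := fun y hy =>
    Summable.of_norm_bounded hu (fun n => hg'bound n y hy)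
  have Sf : ∀ y : ℝ, y ∈ Metric.ball (0:ℝ) r → Summable (fun n => g n y) := by
    intro y hy
    rw [mem_ball_zero_iff, Real.norm_eq_abs] at hy
    apply Summable.of_norm_bounded (g := fun n => bcoef a n * ((n : ℝ) + 1) * r ^ n)
      (summable_master ha hr0 hr1)
    intro n
    have hb := bcoef_pos ha n
    have h1 : ‖g n y‖ = bcoef a n * |y| ^ n := by
      simp only [hg_def]; rw [Real.norm_eq_abs, abs_mul, abs_pow, abs_of_pos hb]
    rw [h1]
    have h2 : |y| ^ n ≤ r ^ n := pow_le_pow_left₀ (abs_nonneg y) hy.le n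
    calc bcoef a n * |y| ^ n ≤ bcoef a n * r ^ n :=
          mul_le_mul_of_nonneg_left h2 hb.le
      _ ≤ bcoef a n * ((n : ℝ) + 1) * r ^ n := by
          have : bcoef a n * 1 ≤ bcoef a n * ((n : ℝ) + 1) :=
            mul_le_mul_of_nonneg_left (by linarith [Nat.cast_nonneg (α := ℝ) n]) hb.le
          nlinarith [pow_pos hr0 n]
  set F : ℝ → ℝ := fun y => ∑' n, g n y with hF_def
  have hderiv : ∀ y ∈ Metric.ball (0:ℝ) r, HasDerivAt F (∑' n, g' n y) y := by
    intro y hy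
    exact hasDerivAt_tsum_of_isPreconnected hu Metric.isOpen_ball
      (convex_ball 0 r).isPreconnected (fun n z _ => hgderiv n z)
      (fun n z hz => hg'bound n z hz) h0mem hg0 hy
  have hkey : ∀ y ∈ Metric.ball (0:ℝ) r, (1 - y) * (∑' n, g' n y) = a * F y := by
    intro y hy
    have hshift : (∑' n, g' n y) = ∑' n, g' (n+1) y := by
      rw [Summable.tsum_eq_zero_add (Sd y hy)]
      simp [hg'_def]
    have hterm : ∀ n : ℕ, g' (n+1) y = y * g' n y + a * g n y := by
      intro n
      simp only [hg'_def, hg_def]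
      rw [bcoef_succ ha n]
      have h1 : ((n:ℝ) + 1) ≠ 0 := by positivity
      push_cast
      match n with
      | 0 => push_cast; ring_nf
      | (m+1) =>
        have h2 : ((m:ℝ) + 1 + 1) ≠ 0 := by positivity
        simp only [Nat.add_sub_cancel]
        field_simp
        ring
    have hsum1 : Summable (fun n => y * g' n y) := (Sd y hy).mul_left y
    have hsum2 : Summable (fun n => a * g n y) := (Sf y hy).mul_left a
    have hmain : (∑' n, g' n y) = y * (∑' n, g' n y) + a * F y := by
      conv_lhs => rw [hshift]
      calc (∑' n, g' (n+1) y) = ∑' n, (y * g' n y + a * g n y) := by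
            exact tsum_congr fun n => hterm n
        _ = (∑' n, y * g' n y) + ∑' n, a * g n y := Summable.tsum_add hsum1 hsum2
        _ = y * (∑' n, g' n y) + a * F y := by rw [tsum_mul_left, tsum_mul_left]
    linarith [hmain]
  -- the function G is constant on [0, x]
  set G : ℝ → ℝ := fun y => (1 - y) ^ a * F y with hG_def
  have hmem : ∀ y ∈ Set.Icc (0:ℝ) x, y ∈ Metric.ball (0:ℝ) r := by
    intro y hy
    rw [mem_ball_zero_iff, Real.norm_eq_abs, abs_of_nonneg hy.1]
    linarith [hy.2]
  have hGderiv : ∀ y ∈ Set.Icc (0:ℝ) x, HasDerivAt G 0 y := by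
    intro y hy
    have hyb := hmem y hy
    have h1y : (0:ℝ) < 1 - y := by
      rw [mem_ball_zero_iff, Real.norm_eq_abs] at hyb
      have := abs_lt.mp hyb
      linarith [this.2]
    have hpow : HasDerivAt (fun z : ℝ => (1 - z) ^ a) (-1 * a * (1 - y) ^ (a - 1)) y := by
      have hid : HasDerivAt (fun z : ℝ => 1 - z) (-1) y := by
        simpa using (hasDerivAt_id y).const_sub 1
      exact hid.rpow_const (Or.inl h1y.ne')
    have hfd := hderiv y hyb
    have hprod := hpow.mul hfd
    have : -1 * a * (1 - y) ^ (a - 1) * F y + (1 - y) ^ a * (∑' n, g' n y) = 0 := by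
      have hsplit : (1 - y) ^ a = (1 - y) ^ (a - 1) * (1 - y) := by
        rw [← Real.rpow_add_one h1y.ne' (a - 1)]
        ring_nf
      have hk := hkey y hyb
      have heq : -1 * a * (1 - y) ^ (a - 1) * F y + (1 - y) ^ a * (∑' n, g' n y)
          = (1 - y) ^ (a - 1) * ((1 - y) * (∑' n, g' n y) - a * F y) := by
        rw [hsplit]; ring
      rw [heq, hk]
      ring
    rw [this] at hprod
    exact hprod
  have hconst : G x = G 0 := by
    have := constant_of_has_deriv_right_zero
      (f := G) (a := 0) (b := x)
      (fun y hy => (hGderiv y hy).differentiableAt.continuousAt.continuousWithinAt)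
      (fun y hy => ((hGderiv y (Set.Ico_subset_Icc_self hy)).hasDerivWithinAt))
    exact this x (Set.mem_Icc.mpr ⟨hx0, le_refl x⟩)
  have hF0 : F 0 = 1 := by
    show (∑' n, g n 0) = 1
    rw [tsum_eq_single 0 (fun n hn => by simp [hg_def, zero_pow hn])]
    simp [hg_def, bcoef_zero a ha]
  have hG0 : G 0 = 1 := by simp [hG_def, hF0, Real.one_rpow]
  have h1x : (0:ℝ) < 1 - x := by linarith
  have hFx : F x = (1 - x) ^ (-a) := by
    have h := hconst
    rw [hG0, hG_def] at h
    simp only at h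
    have hne : (1 - x) ^ a ≠ 0 := (Real.rpow_pos_of_pos h1x a).ne'
    rw [Real.rpow_neg h1x.le]
    field_simp at h ⊢
    linarith [h]
  have hs := Sf x (hmem x (Set.mem_Icc.mpr ⟨hx0, le_refl x⟩))
  have := hs.hasSum
  rw [show (∑' n, g n x) = F x from rfl, hFx] at this
  exact this

/-- `Pcell η j` : probability that a typical Poisson–Voronoi cell contains exactly `j`
D2D helpers, with density ratio `η = λ_d / λ_m`. -/
noncomputable def Pcell (η : ℝ) (j : ℕ) : ℝ :=
  (3.5 : ℝ) ^ (3.5 : ℝ) * Real.Gamma ((j : ℝ) + 3.5) * η ^ j /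
    (Real.Gamma 3.5 * (Nat.factorial j : ℝ) * (η + 3.5) ^ ((j : ℝ) + 3.5))

lemma Pcell_eq {η : ℝ} (hη : 0 < η) (j : ℕ) :
    Pcell η j = bcoef 3.5 j * (η / (η + 3.5)) ^ j * ((3.5 : ℝ) / (η + 3.5)) ^ (3.5 : ℝ) := by
  have hp : (0:ℝ) < η + 3.5 := by linarith
  have hG : (0:ℝ) < Real.Gamma 3.5 := Real.Gamma_pos_of_pos (by norm_num)
  have hrpow : (η + 3.5) ^ ((j : ℝ) + 3.5) = (η + 3.5) ^ j * (η + 3.5) ^ (3.5 : ℝ) := by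
    rw [Real.rpow_add hp, Real.rpow_natCast]
  have hdiv : ((3.5 : ℝ) / (η + 3.5)) ^ (3.5 : ℝ)
      = (3.5 : ℝ) ^ (3.5 : ℝ) / (η + 3.5) ^ (3.5 : ℝ) :=
    Real.div_rpow (by norm_num : (0:ℝ) ≤ 3.5) hp.le _
  rw [Pcell, bcoef, hrpow, hdiv, div_pow]
  have h1 : (η + 3.5) ^ (3.5 : ℝ) ≠ 0 := (Real.rpow_pos_of_pos hp _).ne'
  have h2 : ((η + 3.5) ^ j : ℝ) ≠ 0 := by positivity
  have h3 : (Nat.factorial j : ℝ) ≠ 0 := by positivity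
  field_simp

lemma Pcell_hasSum {η : ℝ} (hη : 0 < η) : HasSum (Pcell η) 1 := by
  have hp : (0:ℝ) < η + 3.5 := by linarith
  set x : ℝ := η / (η + 3.5) with hx_def
  have hx0 : 0 ≤ x := by positivity
  have hx1 : x < 1 := (div_lt_one hp).mpr (by linarith)
  have h1x : 1 - x = (3.5 : ℝ) / (η + 3.5) := by
    rw [hx_def]; field_simp; ring
  have h1xpos : (0:ℝ) < 1 - x := by linarith
  have hbs := (binom_hasSum (show (0:ℝ) < 3.5 by norm_num) hx0 hx1).mul_right
    ((1 - x) ^ (3.5 : ℝ))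
  have hval : (1 - x) ^ (-(3.5:ℝ)) * (1 - x) ^ (3.5:ℝ) = 1 := by
    rw [← Real.rpow_add h1xpos]
    norm_num
  rw [hval] at hbs
  have hfun : (fun j : ℕ => bcoef 3.5 j * x ^ j * (1 - x) ^ (3.5:ℝ)) = Pcell η := by
    funext j
    rw [Pcell_eq hη j, h1x]
  rwa [hfun] at hbs

lemma Pcell_zero {η : ℝ} (hη : 0 < η) :
    Pcell η 0 = (1 + η / 3.5) ^ (-(3.5 : ℝ)) := by
  have hp : (0:ℝ) < η + 3.5 := by linarith
  have h1 : (1 : ℝ) + η / 3.5 = (η + 3.5) / 3.5 := by ring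
  rw [Pcell_eq hη 0, bcoef_zero _ (by norm_num : (0:ℝ) < 3.5), h1]
  have h2 : ((3.5:ℝ) / (η + 3.5)) = ((η + 3.5) / 3.5)⁻¹ := by
    rw [inv_div]
  rw [h2, Real.inv_rpow (by positivity : (0:ℝ) ≤ (η + 3.5) / 3.5),
    Real.rpow_neg (by positivity : (0:ℝ) ≤ (η + 3.5) / 3.5)]
  ring

theorem stmt_2 (η : ℝ) (hη : 0 < η) (k : ℕ) (hk : 1 ≤ k) (h : ℝ) :
    h * ∑ i ∈ Finset.Icc 1 k,
          ((1 / (k : ℝ)) * (∑' j : ℕ, Pcell η (j + (k + 1))) +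
            ∑ j ∈ Finset.range (k - i + 1), Pcell η (i + j) / ((i + j : ℕ) : ℝ)) =
      h * (1 - (1 + η / 3.5) ^ (-(3.5 : ℝ))) := by
  have hP := Pcell_hasSum hη
  have hsum := hP.summable
  have hk0 : ((k : ℝ)) ≠ 0 := Nat.cast_ne_zero.mpr (by omega)
  congr 1
  rw [Finset.sum_add_distrib, Finset.sum_const, Nat.card_Icc]
  have hc : (k + 1 - 1) • ((1 / (k:ℝ)) * ∑' j : ℕ, Pcell η (j + (k + 1)))
      = ∑' j : ℕ, Pcell η (j + (k + 1)) := by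
    simp only [Nat.add_sub_cancel, nsmul_eq_mul]
    field_simp
  rw [hc]
  have hinner : ∀ i ∈ Finset.Icc 1 k,
      (∑ j ∈ Finset.range (k - i + 1), Pcell η (i + j) / ((i + j : ℕ) : ℝ))
      = ∑ m ∈ Finset.Icc i k, Pcell η m / (m : ℝ) := by
    intro i hi
    rw [Finset.mem_Icc] at hi
    rw [← Finset.Ico_add_one_right_eq_Icc, Finset.sum_Ico_eq_sum_range]
    have he : k + 1 - i = k - i + 1 := by omega
    rw [he]
  rw [Finset.sum_congr rfl hinner]
  have hswap : (∑ i ∈ Finset.Icc 1 k, ∑ m ∈ Finset.Icc i k, Pcell η m / (m : ℝ))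
      = ∑ m ∈ Finset.Icc 1 k, ∑ _i ∈ Finset.Icc 1 m, Pcell η m / (m : ℝ) := by
    apply Finset.sum_comm'
    intro i m
    simp only [Finset.mem_Icc]
    omega
  rw [hswap]
  have hinner2 : ∀ m ∈ Finset.Icc 1 k,
      (∑ _i ∈ Finset.Icc 1 m, Pcell η m / (m : ℝ)) = Pcell η m := by
    intro m hm
    rw [Finset.mem_Icc] at hm
    rw [Finset.sum_const, Nat.card_Icc, Nat.add_sub_cancel, nsmul_eq_mul]
    have hm0 : ((m : ℝ)) ≠ 0 := Nat.cast_ne_zero.mpr (by omega)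
    field_simp
  rw [Finset.sum_congr rfl hinner2]
  have hsplit := Summable.sum_add_tsum_nat_add (f := Pcell η) (k+1) hsum
  rw [hP.tsum_eq] at hsplit
  have hrange : (∑ i ∈ Finset.range (k+1), Pcell η i)
      = Pcell η 0 + ∑ m ∈ Finset.Icc 1 k, Pcell η m := by
    rw [Finset.sum_range_succ']
    have h2 : (∑ i ∈ Finset.range k, Pcell η (i+1)) = ∑ m ∈ Finset.Icc 1 k, Pcell η m := by
      rw [← Finset.Ico_add_one_right_eq_Icc, Finset.sum_Ico_eq_sum_range]
      have h3 : k + 1 - 1 = k := by omega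
      rw [h3]
      exact Finset.sum_congr rfl fun i _ => by rw [Nat.add_comm]
    rw [h2]
    ring
  rw [hrange] at hsplit
  rw [← Pcell_zero hη]
  linarith
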